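/- For all x in (0, π/4), cosh(x)² · (cos(x)² − sin(x)²) < cos(x)². -/
import Mathlib

open Real

lemma aux_sinh_lt (t : ℝ) (ht : 0 < t) : Real.sinh t < t * Real.cosh t := by
  have h : StrictMonoOn (fun x : ℝ => x * Real.cosh x - Real.sinh x) (Set.Ici 0) := by
    refine strictMonoOn_of_deriv_pos (convex_Ici 0) (by fun_prop) ?_
    intro x hx
    rw [interior_Ici, Set.mem_Ioi] at hx
    have hd : HasDerivAt (fun x : ℝ => x * Real.cosh x - Real.sinh x)
        (1 * Real.cosh x + x * Real.sinh x - Real.cosh x) x :=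
      ((hasDerivAt_id x).mul (Real.hasDerivAt_cosh x)).sub (Real.hasDerivAt_sinh x)
    rw [hd.deriv]
    have := Real.sinh_pos_iff.2 hx
    nlinarith
  have := h (Set.self_mem_Ici) (Set.mem_Ici.2 ht.le) ht
  simpa using this

lemma aux_key (t : ℝ) (ht0 : 0 < t) (ht : t < Real.pi / 2) :
    Real.cosh t * Real.cos t < 1 := by
  have h : StrictAntiOn (fun x : ℝ => Real.cosh x * Real.cos x) (Set.Icc 0 (Real.pi / 2)) := by
    refine strictAntiOn_of_deriv_neg (convex_Icc _ _) (by fun_prop) ?_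
    intro x hx
    rw [interior_Icc, Set.mem_Ioo] at hx
    obtain ⟨hx0, hx2⟩ := hx
    have hd : HasDerivAt (fun x : ℝ => Real.cosh x * Real.cos x)
        (Real.sinh x * Real.cos x + Real.cosh x * (-Real.sin x)) x :=
      (Real.hasDerivAt_cosh x).mul (Real.hasDerivAt_cos x)
    rw [hd.deriv]
    have hcos : 0 < Real.cos x := Real.cos_pos_of_mem_Ioo ⟨by linarith [Real.pi_pos], hx2⟩
    have h1 : Real.sinh x < x * Real.cosh x := aux_sinh_lt x hx0
    have h2 : x < Real.tan x := Real.lt_tan hx0 hx2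
    rw [Real.tan_eq_sin_div_cos, lt_div_iff₀ hcos] at h2
    have hch : 0 < Real.cosh x := Real.cosh_pos x
    nlinarith
  have := h (Set.mem_Icc.2 ⟨le_refl 0, by linarith⟩) (Set.mem_Icc.2 ⟨ht0.le, ht.le⟩) ht0
  simpa using this

theorem stmt_16 (x : ℝ) (hx : x ∈ Set.Ioo 0 (Real.pi / 4)) :
    Real.cosh x ^ 2 * (Real.cos x ^ 2 - Real.sin x ^ 2) < Real.cos x ^ 2 := by
  obtain ⟨hx0, hx4⟩ := hx
  have hkey : Real.cosh (2 * x) * Real.cos (2 * x) < 1 :=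
    aux_key (2 * x) (by linarith) (by linarith)
  have h1 : Real.sin x ^ 2 + Real.cos x ^ 2 = 1 := Real.sin_sq_add_cos_sq x
  have h2 : Real.cosh (2 * x) = 2 * Real.cosh x ^ 2 - 1 := by
    rw [Real.cosh_two_mul, Real.cosh_sq]; ring
  have h3 : Real.cos (2 * x) = 2 * Real.cos x ^ 2 - 1 := Real.cos_two_mul x
  nlinarith [Real.cosh_pos (x := x)]
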